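/- Let w₁, w₂, … be i.i.d. positive random variables with finite mean, s_n = w₁ + ⋯ + w_n, and consider the random graph G_n on n vertices where, conditionally on the weights, each edge {i,j} (i < j) is present independently with probability 1 − exp(−w_i w_j / s_n). Then E(|E_n|)/n → E(w₁)/2 as n → ∞, where |E_n| is the number of edges of G_n. -/

import Mathlib

open Filter Topology MeasureTheory ProbabilityTheory Finset

lemma NR_one_sub_exp_neg_le (x : ℝ) : 1 - Real.exp (-x) ≤ x := by
  have := Real.add_one_le_exp (-x); linarith

lemma NR_le_one_sub_exp_neg {x : ℝ} (hx : 0 ≤ x) : x - x ^ 2 ≤ 1 - Real.exp (-x) := by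
  have h1 := Real.add_one_le_exp x
  have h2 : Real.exp (-x) * Real.exp x = 1 := by rw [← Real.exp_add]; simp
  have h3 : (0:ℝ) < Real.exp (-x) := Real.exp_pos _
  nlinarith [mul_le_mul_of_nonneg_left h1 h3.le]

lemma NR_double_sum (f : ℕ → ℝ) (n : ℕ) :
    2 * ∑ i ∈ range n, ∑ j ∈ range n, (if i < j then f i * f j else 0)
      = (∑ i ∈ range n, f i) ^ 2 - ∑ i ∈ range n, f i ^ 2 := by
  have key : ∀ i j : ℕ, f i * f j =
      (if i < j then f i * f j else 0) + (if i = j then f i * f j else 0)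
        + (if j < i then f i * f j else 0) := by
    intro i j
    rcases lt_trichotomy i j with h | h | h
    · simp [h, h.ne, (lt_asymm h)]
    · simp [h]
    · simp [h, h.ne', (lt_asymm h), not_lt_of_gt h]
  have expand : (∑ i ∈ range n, f i) ^ 2 = ∑ i ∈ range n, ∑ j ∈ range n, f i * f j := by
    rw [sq, Finset.sum_mul_sum]
  have diag : ∑ i ∈ range n, ∑ j ∈ range n, (if i = j then f i * f j else 0)
      = ∑ i ∈ range n, f i ^ 2 := by
    refine Finset.sum_congr rfl fun i hi => ?_
    rw [Finset.sum_ite_eq (range n) i (fun j => f i * f j)]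
    simp [hi, sq]
  have swap : ∑ i ∈ range n, ∑ j ∈ range n, (if j < i then f i * f j else 0)
      = ∑ i ∈ range n, ∑ j ∈ range n, (if i < j then f i * f j else 0) := by
    rw [Finset.sum_comm]
    exact Finset.sum_congr rfl fun i _ => Finset.sum_congr rfl fun j _ => by
      rcases lt_or_ge i j with h | h <;> simp [h, mul_comm, not_lt_of_gt, lt_iff_lt_of_le_iff_le]
  calc 2 * ∑ i ∈ range n, ∑ j ∈ range n, (if i < j then f i * f j else 0)
      = ∑ i ∈ range n, ∑ j ∈ range n, (if i < j then f i * f j else 0)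
        + ∑ i ∈ range n, ∑ j ∈ range n, (if j < i then f i * f j else 0) := by rw [swap]; ring
    _ = (∑ i ∈ range n, f i) ^ 2 - ∑ i ∈ range n, f i ^ 2 := by
        have e2 : ∑ i ∈ range n, ∑ j ∈ range n, f i * f j
            = ∑ i ∈ range n, ∑ j ∈ range n, ((if i < j then f i * f j else 0)
              + (if i = j then f i * f j else 0) + (if j < i then f i * f j else 0)) :=
          Finset.sum_congr rfl fun i _ => Finset.sum_congr rfl fun j _ => key i j
        rw [expand, e2]
        simp only [Finset.sum_add_distrib, diag]
        ring

lemma NR_sum_ite_div (h : ℕ → ℕ → ℝ) (c : ℝ) (n : ℕ) :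
    ∑ i ∈ range n, ∑ j ∈ range n, (if i < j then h i j / c else 0)
      = (∑ i ∈ range n, ∑ j ∈ range n, (if i < j then h i j else 0)) / c := by
  rw [Finset.sum_div]
  exact Finset.sum_congr rfl fun i _ => by
    rw [Finset.sum_div]
    exact Finset.sum_congr rfl fun j _ => by split_ifs <;> simp

lemma NR_pointwise_ub (g : ℕ → ℝ) (n : ℕ) (hg : ∀ k, 0 < g k) :
    ∑ i ∈ range n, ∑ j ∈ range n,
        (if i < j then 1 - Real.exp (-(g i * g j) / ∑ k ∈ range n, g k) else 0)
      ≤ (∑ k ∈ range n, g k) / 2 := by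
  rcases Nat.eq_zero_or_pos n with rfl | hn
  · simp
  set S := ∑ k ∈ range n, g k with hSdef
  have hS : 0 < S := Finset.sum_pos (fun k _ => hg k) (by simp [hn.ne'])
  have step1 : ∑ i ∈ range n, ∑ j ∈ range n,
      (if i < j then 1 - Real.exp (-(g i * g j) / S) else 0)
      ≤ ∑ i ∈ range n, ∑ j ∈ range n, (if i < j then g i * g j / S else 0) := by
    refine Finset.sum_le_sum fun i _ => Finset.sum_le_sum fun j _ => ?_
    split_ifs
    · rw [neg_div]; exact NR_one_sub_exp_neg_le _
    · exact le_rfl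
  have step2 := NR_sum_ite_div (fun i j => g i * g j) S n
  have hA : ∑ i ∈ range n, ∑ j ∈ range n, (if i < j then g i * g j else 0) ≤ S ^ 2 / 2 := by
    have h2 := NR_double_sum g n
    have hsq : 0 ≤ ∑ i ∈ range n, g i ^ 2 :=
      Finset.sum_nonneg fun i _ => sq_nonneg _
    rw [← hSdef] at h2
    linarith
  calc ∑ i ∈ range n, ∑ j ∈ range n,
      (if i < j then 1 - Real.exp (-(g i * g j) / S) else 0)
      ≤ ∑ i ∈ range n, ∑ j ∈ range n, (if i < j then g i * g j / S else 0) := step1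
    _ = (∑ i ∈ range n, ∑ j ∈ range n, (if i < j then g i * g j else 0)) / S := step2
    _ ≤ (S ^ 2 / 2) / S := by gcongr
    _ = S / 2 := by field_simp

lemma NR_pointwise_lb (g : ℕ → ℝ) (M : ℝ) (n : ℕ) (hg : ∀ k, 0 < g k) (hM : 0 ≤ M) :
    (∑ k ∈ range n, min (g k) M) ^ 2 / (2 * ∑ k ∈ range n, g k) - (M / 2 + M ^ 2 / 2)
      ≤ ∑ i ∈ range n, ∑ j ∈ range n,
        (if i < j then 1 - Real.exp (-(g i * g j) / ∑ k ∈ range n, g k) else 0) := by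
  rcases Nat.eq_zero_or_pos n with rfl | hn
  · simp
    nlinarith [sq_nonneg M]
  set a : ℕ → ℝ := fun k => min (g k) M with hadef
  set S := ∑ k ∈ range n, g k with hSdef
  set T := ∑ k ∈ range n, a k with hTdef
  have hS : 0 < S := Finset.sum_pos (fun k _ => hg k) (by simp [hn.ne'])
  have ha0 : ∀ k, 0 ≤ a k := fun k => le_min (hg k).le hM
  have haM : ∀ k, a k ≤ M := fun k => min_le_right _ _
  have hag : ∀ k, a k ≤ g k := fun k => min_le_left _ _
  have hT0 : 0 ≤ T := Finset.sum_nonneg fun k _ => ha0 k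
  have hTS : T ≤ S := Finset.sum_le_sum fun k _ => hag k
  set A := ∑ i ∈ range n, ∑ j ∈ range n, (if i < j then a i * a j else 0) with hAdef
  set B := ∑ i ∈ range n, ∑ j ∈ range n, (if i < j then (a i * a j) ^ 2 else 0) with hBdef
  have hSa0 : 0 ≤ ∑ i ∈ range n, a i ^ 2 := Finset.sum_nonneg fun i _ => sq_nonneg _
  have hSaM : ∑ i ∈ range n, a i ^ 2 ≤ M * T := by
    rw [hTdef, Finset.mul_sum]
    exact Finset.sum_le_sum fun i _ => by nlinarith [ha0 i, haM i]
  have h2A := NR_double_sum a n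
  rw [← hTdef, ← hAdef] at h2A
  have hA0 : 0 ≤ A :=
    Finset.sum_nonneg fun i _ => Finset.sum_nonneg fun j _ => by
      split_ifs
      · exact mul_nonneg (ha0 i) (ha0 j)
      · exact le_rfl
  have hBA : B ≤ M ^ 2 * A := by
    rw [hAdef, Finset.mul_sum]
    refine Finset.sum_le_sum fun i _ => ?_
    rw [Finset.mul_sum]
    refine Finset.sum_le_sum fun j _ => ?_
    split_ifs
    · nlinarith [mul_le_mul (haM i) (haM j) (ha0 j) hM, mul_nonneg (ha0 i) (ha0 j)]
    · simp
  calc T ^ 2 / (2 * S) - (M / 2 + M ^ 2 / 2)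
      ≤ A / S - B / S ^ 2 := by
        have h1 : T ^ 2 / (2 * S) - M / 2 ≤ A / S := by
          have hAval : A = (T ^ 2 - ∑ i ∈ range n, a i ^ 2) / 2 := by linarith
          have hAS : A / S = (T ^ 2 - ∑ i ∈ range n, a i ^ 2) / (2 * S) := by
            rw [hAval, div_div]
          have hSaS : ∑ i ∈ range n, a i ^ 2 ≤ M * S :=
            hSaM.trans (mul_le_mul_of_nonneg_left hTS hM)
          have e1 : (T ^ 2 - M * S) / (2 * S) ≤ (T ^ 2 - ∑ i ∈ range n, a i ^ 2) / (2 * S) := by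
            gcongr
          have e2 : (T ^ 2 - M * S) / (2 * S) = T ^ 2 / (2 * S) - M / 2 := by
            field_simp
          rw [hAS, ← e2]
          linarith [e1]
        have h2 : B / S ^ 2 ≤ M ^ 2 / 2 := by
          have hAT : A ≤ T ^ 2 / 2 := by linarith
          have : B ≤ M ^ 2 * S ^ 2 / 2 := by nlinarith [mul_le_mul_of_nonneg_left hAT (sq_nonneg M), pow_le_pow_left₀ hT0 hTS 2]
          calc B / S ^ 2 ≤ (M ^ 2 * S ^ 2 / 2) / S ^ 2 := by gcongr
            _ = M ^ 2 / 2 := by field_simp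
        linarith
    _ = ∑ i ∈ range n, ∑ j ∈ range n,
        (if i < j then a i * a j / S - (a i * a j) ^ 2 / S ^ 2 else 0) := by
        have e1 := NR_sum_ite_div (fun i j => a i * a j) S n
        have e2 := NR_sum_ite_div (fun i j => (a i * a j) ^ 2) (S ^ 2) n
        rw [← hAdef] at e1
        rw [← hBdef] at e2
        rw [← e1, ← e2, ← Finset.sum_sub_distrib]
        refine Finset.sum_congr rfl fun i _ => ?_
        rw [← Finset.sum_sub_distrib]
        refine Finset.sum_congr rfl fun j _ => ?_
        split_ifs <;> simp
    _ ≤ ∑ i ∈ range n, ∑ j ∈ range n,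
        (if i < j then 1 - Real.exp (-(a i * a j) / S) else 0) := by
        refine Finset.sum_le_sum fun i _ => Finset.sum_le_sum fun j _ => ?_
        split_ifs
        · have := NR_le_one_sub_exp_neg
            (x := a i * a j / S) (div_nonneg (mul_nonneg (ha0 i) (ha0 j)) hS.le)
          rw [neg_div]
          calc a i * a j / S - (a i * a j) ^ 2 / S ^ 2
              = a i * a j / S - (a i * a j / S) ^ 2 := by rw [div_pow]
            _ ≤ 1 - Real.exp (-(a i * a j / S)) := this
        · exact le_rfl
    _ ≤ ∑ i ∈ range n, ∑ j ∈ range n,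
        (if i < j then 1 - Real.exp (-(g i * g j) / S) else 0) := by
        refine Finset.sum_le_sum fun i _ => Finset.sum_le_sum fun j _ => ?_
        split_ifs
        · have hm : a i * a j ≤ g i * g j :=
            mul_le_mul (hag i) (hag j) (ha0 j) (hg i).le
          have hdiv : a i * a j / S ≤ g i * g j / S := (div_le_div_iff_of_pos_right hS).mpr hm
          exact sub_le_sub_left (Real.exp_le_exp.mpr
            (by rw [neg_div, neg_div]; exact neg_le_neg hdiv)) 1
        · exact le_rfl


section Main
variable {Ω : Type*} [MeasurableSpace Ω]

/-- The integrand: number-of-edges functional. -/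
noncomputable def NRF (w : ℕ → Ω → ℝ) (n : ℕ) (ω : Ω) : ℝ :=
  ∑ i ∈ range n, ∑ j ∈ range n,
    (if i < j then 1 - Real.exp (-(w i ω * w j ω) / ∑ k ∈ range n, w k ω) else 0)

theorem norros_reittu_main (μ : Measure Ω) [IsProbabilityMeasure μ]
    (w : ℕ → Ω → ℝ)
    (hmeas : ∀ i, Measurable (w i))
    (hpos : ∀ i ω, 0 < w i ω)
    (hindep : iIndepFun (m := fun _ => Real.measurableSpace) w μ)
    (hident : ∀ i, IdentDistrib (w i) (w 0) μ μ)
    (hint : Integrable (w 0) μ) :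
    Tendsto (fun n : ℕ => (∫ ω, NRF w n ω ∂μ) / n) atTop
      (𝓝 ((∫ ω, w 0 ω ∂μ) / 2)) := by
  classical
  set Ew : ℝ := ∫ ω, w 0 ω ∂μ with hEwdef
  set f : ℕ → ℝ := fun n => (∫ ω, NRF w n ω ∂μ) / n with hfdef
  have hEwpos : 0 < Ew := by
    rw [hEwdef, integral_pos_iff_support_of_nonneg (fun ω => (hpos 0 ω).le) hint]
    have hs : Function.support (w 0) = Set.univ :=
      Set.eq_univ_of_forall fun ω => (hpos 0 ω).ne'
    simp [hs]
  have hintk : ∀ k, Integrable (w k) μ := fun k => (hident k).integrable_iff.2 hint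
  have hmeas_s : ∀ n, Measurable (fun ω => ∑ k ∈ range n, w k ω) := fun n =>
    Finset.measurable_sum _ fun k _ => hmeas k
  have hint_s : ∀ n, Integrable (fun ω => ∑ k ∈ range n, w k ω) μ := fun n =>
    integrable_finset_sum _ fun k _ => hintk k
  have hEs : ∀ n : ℕ, ∫ ω, (∑ k ∈ range n, w k ω) ∂μ = n * Ew := by
    intro n
    rw [integral_finset_sum _ fun k _ => hintk k]
    rw [Finset.sum_congr rfl fun k _ => (hident k).integral_eq]
    simp [mul_comm, hEwdef]
  have hmeasF : ∀ n, Measurable (NRF w n) := by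
    intro n
    apply Finset.measurable_sum
    intro i _
    apply Finset.measurable_sum
    intro j _
    split_ifs
    · exact measurable_const.sub
        ((((hmeas i).mul (hmeas j)).neg.div (hmeas_s n)).exp)
    · exact measurable_const
  have hF_nonneg : ∀ n ω, 0 ≤ NRF w n ω := by
    intro n ω
    refine Finset.sum_nonneg fun i hi => Finset.sum_nonneg fun j hj => ?_
    split_ifs with hij
    · have hn : 0 < n := lt_of_le_of_lt (Nat.zero_le j) (Finset.mem_range.1 hj)
      have hS : 0 < ∑ k ∈ range n, w k ω :=
        Finset.sum_pos (fun k _ => hpos k ω) (by simp [hn.ne'])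
      have : Real.exp (-(w i ω * w j ω) / ∑ k ∈ range n, w k ω) ≤ 1 := by
        rw [Real.exp_le_one_iff]
        have : 0 ≤ w i ω * w j ω := mul_nonneg (hpos i ω).le (hpos j ω).le
        exact div_nonpos_of_nonpos_of_nonneg (by linarith) hS.le
      linarith
    · exact le_rfl
  have hFub : ∀ n ω, NRF w n ω ≤ (∑ k ∈ range n, w k ω) / 2 := fun n ω =>
    NR_pointwise_ub (fun k => w k ω) n (fun k => hpos k ω)
  have hintF : ∀ n, Integrable (NRF w n) μ := by
    intro n
    refine Integrable.mono ((hint_s n).div_const 2) (hmeasF n).aestronglyMeasurable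
      (Eventually.of_forall fun ω => ?_)
    rw [Real.norm_eq_abs, Real.norm_eq_abs, abs_of_nonneg (hF_nonneg n ω),
      abs_of_nonneg (div_nonneg (Finset.sum_nonneg fun k _ => (hpos k ω).le) two_pos.le)]
    exact hFub n ω
  have hIub : ∀ n : ℕ, f n ≤ Ew / 2 := by
    intro n
    rcases Nat.eq_zero_or_pos n with rfl | hn
    · have : f 0 = 0 := by simp [hfdef]
      rw [this]
      linarith
    · have h1 : ∫ ω, NRF w n ω ∂μ ≤ ∫ ω, (∑ k ∈ range n, w k ω) / 2 ∂μ :=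
        integral_mono (hintF n) ((hint_s n).div_const 2) fun ω => hFub n ω
      rw [integral_div, hEs n] at h1
      have hn' : (0 : ℝ) < n := by exact_mod_cast hn
      calc f n = (∫ ω, NRF w n ω ∂μ) / n := rfl
        _ ≤ (↑n * Ew / 2) / n := by gcongr
        _ = Ew / 2 := by field_simp
  have hf_nonneg : ∀ n, 0 ≤ f n := fun n =>
    div_nonneg (integral_nonneg fun ω => hF_nonneg n ω) (Nat.cast_nonneg n)
  have hpair : Pairwise (Function.onFun (IndepFun · · μ) w) := fun i j hij => hindep.indepFun hij
  have hslw : ∀ᵐ ω ∂μ, Tendsto (fun n : ℕ => (∑ i ∈ range n, w i ω) / n) atTop (𝓝 Ew) :=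
    strong_law_ae_real w hint hpair hident
  have hSpos : ∀ n : ℕ, 0 < n → ∀ ω, 0 < ∑ k ∈ range n, w k ω := fun n hn ω =>
    Finset.sum_pos (fun k _ => hpos k ω) (by simp [hn.ne'])
  have key : ∀ M : ℕ, (∫ ω, min (w 0 ω) (M : ℝ) ∂μ) ^ 2 / (2 * Ew) ≤ liminf f atTop := by
    intro M
    set a : ℕ → Ω → ℝ := fun k ω => min (w k ω) (M : ℝ) with hadef
    have hphi : Measurable (fun x : ℝ => min x (M : ℝ)) := measurable_id.min measurable_const
    have hmeasa : ∀ k, Measurable (a k) := fun k => (hmeas k).min measurable_const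
    have ha0 : ∀ k ω, 0 ≤ a k ω := fun k ω => le_min (hpos k ω).le (Nat.cast_nonneg M)
    have hag : ∀ k ω, a k ω ≤ w k ω := fun k ω => min_le_left _ _
    have hinta : Integrable (a 0) μ := by
      refine hint.mono (hmeasa 0).aestronglyMeasurable (Eventually.of_forall fun ω => ?_)
      rw [Real.norm_eq_abs, Real.norm_eq_abs, abs_of_nonneg (ha0 0 ω),
        abs_of_nonneg (hpos 0 ω).le]
      exact hag 0 ω
    set EwM : ℝ := ∫ ω, a 0 ω ∂μ with hEwMdef
    have hsla : ∀ᵐ ω ∂μ, Tendsto (fun n : ℕ => (∑ i ∈ range n, a i ω) / n) atTop (𝓝 EwM) :=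
      strong_law_ae_real a hinta
        (fun i j hij => (hindep.indepFun hij).comp hphi hphi)
        (fun i => (hident i).comp hphi)
    set D : ℕ → Ω → ℝ := fun n ω =>
      (∑ k ∈ range n, a k ω) ^ 2 / (2 * n * ∑ k ∈ range n, w k ω) with hDdef
    have hmeasD : ∀ n, Measurable (D n) := fun n =>
      ((Finset.measurable_sum _ fun k _ => hmeasa k).pow_const 2).div
        ((hmeas_s n).const_mul _)
    have hTle : ∀ n ω, ∑ k ∈ range n, a k ω ≤ ∑ k ∈ range n, w k ω := fun n ω =>
      Finset.sum_le_sum fun k _ => hag k ω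
    have hT0 : ∀ n ω, 0 ≤ ∑ k ∈ range n, a k ω := fun n ω =>
      Finset.sum_nonneg fun k _ => ha0 k ω
    have hTM : ∀ n ω, ∑ k ∈ range n, a k ω ≤ n * M := by
      intro n ω
      calc ∑ k ∈ range n, a k ω ≤ ∑ _k ∈ range n, (M : ℝ) :=
            Finset.sum_le_sum fun k _ => min_le_right _ _
        _ = n * M := by simp [mul_comm]
    have hDbd : ∀ n ω, ‖D n ω‖ ≤ (M : ℝ) / 2 := by
      intro n ω
      rcases Nat.eq_zero_or_pos n with rfl | hn
      · have : D 0 ω = 0 := by simp [hDdef]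
        rw [this, norm_zero]
        positivity
      · have hS := hSpos n hn ω
        have hn'' : (0 : ℝ) < n := by exact_mod_cast hn
        have hden : (0 : ℝ) < 2 * n * ∑ k ∈ range n, w k ω :=
          mul_pos (mul_pos two_pos hn'') hS
        have hD0 : 0 ≤ D n ω := div_nonneg (sq_nonneg _) hden.le
        rw [Real.norm_eq_abs, abs_of_nonneg hD0]
        have hnum : (∑ k ∈ range n, a k ω) ^ 2 ≤ (n * M) * ∑ k ∈ range n, w k ω := by
          rw [sq]
          exact mul_le_mul (hTM n ω) (hTle n ω) (hT0 n ω) (by positivity)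
        calc D n ω ≤ ((n * M) * ∑ k ∈ range n, w k ω) / (2 * n * ∑ k ∈ range n, w k ω) :=
              (div_le_div_iff_of_pos_right hden).mpr hnum
          _ = (M : ℝ) / 2 := by
              field_simp
    have hDlim : Tendsto (fun n => ∫ ω, D n ω ∂μ) atTop (𝓝 (EwM ^ 2 / (2 * Ew))) := by
      have h := tendsto_integral_of_dominated_convergence (μ := μ)
        (F := fun n ω => D n ω) (f := fun _ => EwM ^ 2 / (2 * Ew)) (fun _ => (M : ℝ) / 2)
        (fun n => (hmeasD n).aestronglyMeasurable) (integrable_const _)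
        (fun n => Eventually.of_forall fun ω => hDbd n ω) ?_
      · simpa using h
      filter_upwards [hslw, hsla] with ω h1 h2
      have base : Tendsto (fun n : ℕ =>
          ((∑ k ∈ range n, a k ω) / n) ^ 2 / (2 * ((∑ k ∈ range n, w k ω) / n)))
          atTop (𝓝 (EwM ^ 2 / (2 * Ew))) :=
        (h2.pow 2).div (h1.const_mul 2) (mul_pos two_pos hEwpos).ne'
      refine base.congr' ?_
      filter_upwards [eventually_ge_atTop 1] with n hn
      have hn' : (n : ℝ) ≠ 0 := Nat.cast_ne_zero.mpr (by omega)
      have hS := (hSpos n (by omega) ω).ne'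
      rw [hDdef]
      field_simp
    have hlow : ∀ n : ℕ, 1 ≤ n →
        (∫ ω, D n ω ∂μ) - ((M : ℝ) / 2 + (M : ℝ) ^ 2 / 2) / n ≤ f n := by
      intro n hn
      have hn' : (0 : ℝ) < n := by exact_mod_cast hn
      set c : ℝ := (M : ℝ) / 2 + (M : ℝ) ^ 2 / 2 with hcdef
      set G : Ω → ℝ := fun ω =>
        (∑ k ∈ range n, a k ω) ^ 2 / (2 * ∑ k ∈ range n, w k ω) with hGdef
      have hmeasG : Measurable G :=
        ((Finset.measurable_sum _ fun k _ => hmeasa k).pow_const 2).div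
          ((hmeas_s n).const_mul 2)
      have hGnn : ∀ ω, 0 ≤ G ω := fun ω =>
        div_nonneg (sq_nonneg _) (mul_nonneg two_pos.le (hSpos n hn ω).le)
      have hGub : ∀ ω, G ω ≤ (∑ k ∈ range n, w k ω) / 2 := by
        intro ω
        have hS := hSpos n hn ω
        have hden : (0 : ℝ) < 2 * ∑ k ∈ range n, w k ω := by positivity
        have hnum : (∑ k ∈ range n, a k ω) ^ 2 ≤ (∑ k ∈ range n, w k ω) ^ 2 :=
          pow_le_pow_left₀ (hT0 n ω) (hTle n ω) 2
        calc G ω ≤ (∑ k ∈ range n, w k ω) ^ 2 / (2 * ∑ k ∈ range n, w k ω) :=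
              (div_le_div_iff_of_pos_right hden).mpr hnum
          _ = (∑ k ∈ range n, w k ω) / 2 := by
              field_simp
      have hintG : Integrable G μ := by
        refine Integrable.mono ((hint_s n).div_const 2) hmeasG.aestronglyMeasurable
          (Eventually.of_forall fun ω => ?_)
        rw [Real.norm_eq_abs, Real.norm_eq_abs, abs_of_nonneg (hGnn ω),
          abs_of_nonneg (div_nonneg (hSpos n hn ω).le two_pos.le)]
        exact hGub ω
      have hmono : ∫ ω, (G ω - c) ∂μ ≤ ∫ ω, NRF w n ω ∂μ := by
        refine integral_mono (hintG.sub (integrable_const c)) (hintF n) fun ω => ?_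
        exact NR_pointwise_lb (fun k => w k ω) (M : ℝ) n (fun k => hpos k ω)
          (Nat.cast_nonneg M)
      rw [integral_sub hintG (integrable_const c), integral_const, probReal_univ,
        one_smul] at hmono
      have hDG : ∫ ω, D n ω ∂μ = (∫ ω, G ω ∂μ) / n := by
        rw [← integral_div]
        refine integral_congr_ae (Eventually.of_forall fun ω => ?_)
        show D n ω = G ω / n
        rw [hDdef, hGdef, div_div, mul_right_comm]
      have step : ((∫ ω, G ω ∂μ) - c) / n ≤ f n := by
        show ((∫ ω, G ω ∂μ) - c) / n ≤ (∫ ω, NRF w n ω ∂μ) / n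
        gcongr
      calc (∫ ω, D n ω ∂μ) - c / n = ((∫ ω, G ω ∂μ) - c) / n := by rw [hDG, sub_div]
        _ ≤ f n := step
    have htend2 : Tendsto
        (fun n : ℕ => (∫ ω, D n ω ∂μ) - ((M : ℝ) / 2 + (M : ℝ) ^ 2 / 2) / n)
        atTop (𝓝 (EwM ^ 2 / (2 * Ew))) := by
      have h0 : Tendsto (fun n : ℕ => ((M : ℝ) / 2 + (M : ℝ) ^ 2 / 2) / n) atTop (𝓝 0) :=
        tendsto_const_div_atTop_nhds_zero_nat _
      simpa using hDlim.sub h0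
    have hcb : IsCoboundedUnder (· ≥ ·) atTop
        (fun n : ℕ => (∫ ω, D n ω ∂μ) - ((M : ℝ) / 2 + (M : ℝ) ^ 2 / 2) / n) :=
      htend2.isBoundedUnder_le.isCoboundedUnder_ge
    have hbd : IsBoundedUnder (· ≤ ·) atTop f :=
      isBoundedUnder_of_eventually_le (Eventually.of_forall hIub)
    calc (∫ ω, a 0 ω ∂μ) ^ 2 / (2 * Ew)
        = liminf (fun n : ℕ =>
            (∫ ω, D n ω ∂μ) - ((M : ℝ) / 2 + (M : ℝ) ^ 2 / 2) / n) atTop :=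
          htend2.liminf_eq.symm
      _ ≤ liminf f atTop := by
          refine liminf_le_liminf ?_ htend2.isBoundedUnder_ge
            hbd.isCoboundedUnder_ge
          filter_upwards [eventually_ge_atTop 1] with n hn
          exact hlow n hn
  have hMlim : Tendsto (fun M : ℕ => (∫ ω, min (w 0 ω) (M : ℝ) ∂μ) ^ 2 / (2 * Ew))
      atTop (𝓝 (Ew / 2)) := by
    have hInner : Tendsto (fun M : ℕ => ∫ ω, min (w 0 ω) (M : ℝ) ∂μ) atTop (𝓝 Ew) := by
      refine tendsto_integral_of_dominated_convergence (fun ω => w 0 ω)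
        (fun M => ((hmeas 0).min measurable_const).aestronglyMeasurable) hint
        (fun M => Eventually.of_forall fun ω => ?_) (Eventually.of_forall fun ω => ?_)
      · rw [Real.norm_eq_abs, abs_of_nonneg (le_min (hpos 0 ω).le (Nat.cast_nonneg M))]
        exact min_le_left _ _
      · refine tendsto_const_nhds.congr' ?_
        filter_upwards [eventually_ge_atTop ⌈w 0 ω⌉₊] with M hM
        exact (min_eq_left ((Nat.le_ceil _).trans (Nat.cast_le.2 hM))).symm
    have heq : Ew ^ 2 / (2 * Ew) = Ew / 2 := by
      rw [sq, mul_comm 2 Ew, mul_div_mul_left _ _ hEwpos.ne']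
    have := (hInner.pow 2).div_const (2 * Ew)
    rwa [heq] at this
  have hliminf : Ew / 2 ≤ liminf f atTop := le_of_tendsto hMlim (Eventually.of_forall key)
  have hlimsup : limsup f atTop ≤ Ew / 2 :=
    limsup_le_of_le (isCoboundedUnder_le_of_le atTop hf_nonneg) (Eventually.of_forall hIub)
  exact tendsto_of_le_liminf_of_limsup_le hliminf hlimsup
    (isBoundedUnder_of_eventually_le (Eventually.of_forall hIub))
    (isBoundedUnder_of_eventually_ge (Eventually.of_forall hf_nonneg))

end Main

/-- Sparsity of the rank-1 Norros–Reittu inhomogeneous random graph: for iid positive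
integrable weights, the expected number of edges
`E|E_n| = E[∑_{i<j<n} (1 - exp(-w_i w_j / s_n))]` satisfies `E|E_n|/n → E(w₁)/2`. -/
theorem norros_reittu_expected_edges
    {Ω : Type*} [MeasurableSpace Ω] (μ : Measure Ω) [IsProbabilityMeasure μ]
    (w : ℕ → Ω → ℝ)
    (hmeas : ∀ i, Measurable (w i))
    (hpos : ∀ i ω, 0 < w i ω)
    (hindep : iIndepFun (m := fun _ => Real.measurableSpace) w μ)
    (hident : ∀ i, IdentDistrib (w i) (w 0) μ μ)
    (hint : Integrable (w 0) μ) :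
    Tendsto (fun n : ℕ =>
      (∫ ω, ∑ i ∈ Finset.range n, ∑ j ∈ Finset.range n,
        (if i < j then
          1 - Real.exp (-(w i ω * w j ω) / ∑ k ∈ Finset.range n, w k ω)
         else 0) ∂μ) / n)
      atTop (𝓝 ((∫ ω, w 0 ω ∂μ) / 2)) := by
  exact norros_reittu_main μ w hmeas hpos hindep hident hint
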